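/- Min-cut lower bound for the modified information flow graph: in the information flow graph of a distributed storage system where each new node keeps incoming links only from a set of at least d − F trusted predecessors and a data collector keeps links to at least k − F trusted nodes, the min-cut from the source to each data collector is at least Σ_{i=0}^{k−F−1} min{(d−F−i)β, α}. -/

import Mathlib

open scoped Classical ENNReal

/-- Nodes of the information flow graph of a distributed storage system with
at most `L` storage nodes: the source, an in/out pair for each storage node,
and a data collector. -/
inductive DSSNode (L : ℕ) where
  | src : DSSNode L
  | inn : Fin L → DSSNode L
  | out : Fin L → DSSNode L
  | dc : DSSNode L
  deriving DecidableEq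

instance (L : ℕ) : Fintype (DSSNode L) :=
  Fintype.ofSurjective
    (fun x : Option (Option (Fin L ⊕ Fin L)) =>
      match x with
      | none => DSSNode.src
      | some none => DSSNode.dc
      | some (some (Sum.inl i)) => DSSNode.inn i
      | some (some (Sum.inr i)) => DSSNode.out i)
    (by intro v; cases v with
        | src => exact ⟨none, rfl⟩
        | dc => exact ⟨some none, rfl⟩
        | inn i => exact ⟨some (some (Sum.inl i)), rfl⟩
        | out i => exact ⟨some (some (Sum.inr i)), rfl⟩)

/-- Edge capacities of the information flow graph: the source feeds the `N`
initial nodes with infinite-capacity edges; each storage node's in-node is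
joined to its out-node with capacity `α`; each later node `j` (with `N ≤ j`)
receives capacity-`β` edges from the out-nodes of its trusted predecessors
`pred j`; the data collector has infinite-capacity edges from the out-nodes
of the trusted nodes `W` it contacts. All other capacities are 0. -/
noncomputable def dssCap (L N : ℕ) (α β : ℝ≥0∞) (pred : Fin L → Finset (Fin L))
    (W : Finset (Fin L)) : DSSNode L → DSSNode L → ℝ≥0∞ := fun u v =>
  match u, v with
  | DSSNode.src, DSSNode.inn i => if (i : ℕ) < N then ⊤ else 0
  | DSSNode.inn i, DSSNode.out j => if i = j then α else 0
  | DSSNode.out i, DSSNode.inn j => if N ≤ (j : ℕ) ∧ i ∈ pred j then β else 0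
  | DSSNode.out i, DSSNode.dc => if i ∈ W then ⊤ else 0
  | _, _ => 0

/-- Capacity of the cut `(U, Uᶜ)`: total capacity of edges from `U` to `Uᶜ`. -/
noncomputable def dssCutCap (L N : ℕ) (α β : ℝ≥0∞) (pred : Fin L → Finset (Fin L))
    (W : Finset (Fin L)) (U : Set (DSSNode L)) : ℝ≥0∞ :=
  ∑ u : DSSNode L, ∑ v : DSSNode L,
    if u ∈ U ∧ v ∉ U then dssCap L N α β pred W u v else 0

/-- Min-cut lower bound for the modified information flow graph:
if each new node keeps incoming links only from a set of at least d − F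
trusted predecessors, and the data collector keeps links to at least k − F
trusted nodes, then every source–DC cut has capacity at least
Σ_{i=0}^{k−F−1} min{(d−F−i)β, α}. -/
theorem stmt_18 (L N d k F : ℕ) (α β : ℝ≥0∞)
    (hβ : β ≠ 0) (hβα : β ≤ α)
    (hNL : N ≤ L) (hN : 1 ≤ N) (hFd : F < d) (hFk : F < k) (hkd : k ≤ d)
    (pred : Fin L → Finset (Fin L))
    (hpred : ∀ j : Fin L, N ≤ (j : ℕ) →
      (∀ i ∈ pred j, (i : ℕ) < (j : ℕ)) ∧ d - F ≤ (pred j).card)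
    (W : Finset (Fin L)) (hW : k - F ≤ W.card)
    (U : Set (DSSNode L)) (hsrc : DSSNode.src ∈ U) (hdc : DSSNode.dc ∉ U) :
    ∑ i ∈ Finset.range (k - F), min (((d - F - i : ℕ) : ℝ≥0∞) * β) α ≤
      dssCutCap L N α β pred W U := by
  classical
  set g : DSSNode L → ℝ≥0∞ := fun x =>
    ∑ u : DSSNode L, if u ∈ U ∧ x ∉ U then dssCap L N α β pred W u x else 0 with hg
  have hgC : ∑ x : DSSNode L, g x = dssCutCap L N α β pred W U := by
    rw [dssCutCap, Finset.sum_comm]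
  have hcol : ∀ x : DSSNode L, g x ≤ dssCutCap L N α β pred W U := by
    intro x
    rw [← hgC]
    exact Finset.single_le_sum (fun _ _ => zero_le) (Finset.mem_univ x)
  have hedge : ∀ u x : DSSNode L, u ∈ U → x ∉ U →
      dssCap L N α β pred W u x ≤ g x := by
    intro u x hu hx
    rw [hg]
    calc dssCap L N α β pred W u x
        = (if u ∈ U ∧ x ∉ U then dssCap L N α β pred W u x else 0) := by simp [hu, hx]
      _ ≤ _ := Finset.single_le_sum
          (f := fun u => if u ∈ U ∧ x ∉ U then dssCap L N α β pred W u x else 0)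
          (fun _ _ => zero_le) (Finset.mem_univ u)
  by_cases hWU : ∀ i ∈ W, DSSNode.out i ∉ U
  swap
  · -- some contacted node's out-node is inside U: infinite edge crosses the cut
    push_neg at hWU
    obtain ⟨i, hiW, hiU⟩ := hWU
    have htop : (⊤ : ℝ≥0∞) ≤ dssCutCap L N α β pred W U := by
      refine le_trans ?_ (le_trans (hedge (DSSNode.out i) DSSNode.dc hiU hdc) (hcol _))
      simp [dssCap, hiW]
    exact le_trans le_top htop
  -- main case
  set B : Finset (Fin L) := Finset.univ.filter (fun i => DSSNode.out i ∉ U) with hB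
  have hWB : W ⊆ B := by
    intro i hi
    simp only [hB, Finset.mem_filter, Finset.mem_univ, true_and]
    exact hWU i hi
  have hmB : k - F ≤ B.card := le_trans hW (Finset.card_le_card hWB)
  set e := B.orderEmbOfFin (rfl : B.card = B.card) with he
  set b : Fin (k - F) → Fin L := fun t => e ⟨(t : ℕ), lt_of_lt_of_le t.2 hmB⟩ with hb
  have hbB : ∀ t, b t ∈ B := fun t => B.orderEmbOfFin_mem rfl _
  have hbU : ∀ t, DSSNode.out (b t) ∉ U := by
    intro t
    have := hbB t
    simp only [hB, Finset.mem_filter] at this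
    exact this.2
  have hbinj : Function.Injective b := by
    intro t1 t2 h
    have h2 := e.injective h
    have h3 := congrArg Fin.val h2
    exact Fin.ext h3
  have hcount : ∀ t : Fin (k - F), (B.filter (fun i => i < b t)).card ≤ (t : ℕ) := by
    intro t
    have hsub : B.filter (fun i => i < b t) ⊆
        (Finset.Iio (⟨(t : ℕ), lt_of_lt_of_le t.2 hmB⟩ : Fin B.card)).image e := by
      intro x hx
      rw [Finset.mem_filter] at hx
      obtain ⟨s, hs⟩ : ∃ s, e s = x := by
        have hr := B.range_orderEmbOfFin (rfl : B.card = B.card)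
        have : x ∈ Set.range e := by rw [hr]; exact hx.1
        exact this
      refine Finset.mem_image.mpr ⟨s, ?_, hs⟩
      rw [Finset.mem_Iio]
      have hlt : e s < e ⟨(t : ℕ), lt_of_lt_of_le t.2 hmB⟩ := by
        rw [hs]; exact hx.2
      exact e.lt_iff_lt.mp hlt
    calc (B.filter (fun i => i < b t)).card
        ≤ ((Finset.Iio (⟨(t : ℕ), lt_of_lt_of_le t.2 hmB⟩ : Fin B.card)).image e).card :=
          Finset.card_le_card hsub
      _ ≤ (Finset.Iio (⟨(t : ℕ), lt_of_lt_of_le t.2 hmB⟩ : Fin B.card)).card :=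
          Finset.card_image_le
      _ = (t : ℕ) := Fin.card_Iio _
  set v : Fin (k - F) → DSSNode L := fun t =>
    if DSSNode.inn (b t) ∈ U then DSSNode.out (b t) else DSSNode.inn (b t) with hv
  have hvinj : Function.Injective v := by
    intro t1 t2 h
    simp only [hv] at h
    by_cases h1 : DSSNode.inn (b t1) ∈ U <;> by_cases h2 : DSSNode.inn (b t2) ∈ U <;>
        simp only [h1, h2, if_true, if_false] at h <;>
      first
        | exact hbinj (by injection h)
        | exact (DSSNode.noConfusion h)
  have key : ∀ t : Fin (k - F),
      min (((d - F - (t : ℕ) : ℕ) : ℝ≥0∞) * β) α ≤ g (v t) := by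
    intro t
    by_cases hinn : DSSNode.inn (b t) ∈ U
    · -- the edge inn → out crosses the cut, contributing α
      have hvt : v t = DSSNode.out (b t) := by simp [hv, hinn]
      rw [hvt]
      refine le_trans (min_le_right _ _) ?_
      have := hedge (DSSNode.inn (b t)) (DSSNode.out (b t)) hinn (hbU t)
      simpa [dssCap] using this
    · have hvt : v t = DSSNode.inn (b t) := by simp [hv, hinn]
      rw [hvt]
      by_cases hbN : (b t : ℕ) < N
      · -- infinite edge from source crosses the cut
        have := hedge DSSNode.src (DSSNode.inn (b t)) hsrc hinn
        have htop : (⊤ : ℝ≥0∞) ≤ g (DSSNode.inn (b t)) := by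
          simpa [dssCap, hbN] using this
        exact le_trans le_top htop
      · -- at least d−F−t predecessors with out-node in U, each contributing β
        have hNb : N ≤ (b t : ℕ) := le_of_not_gt hbN
        obtain ⟨hp1, hp2⟩ := hpred (b t) hNb
        set P : Finset (Fin L) := (pred (b t)).filter (fun i => DSSNode.out i ∈ U) with hP
        have hPcard : d - F - (t : ℕ) ≤ P.card := by
          have hsplit : pred (b t) ⊆ P ∪ B.filter (fun i => i < b t) := by
            intro i hi
            by_cases hiU : DSSNode.out i ∈ U
            · exact Finset.mem_union_left _ (Finset.mem_filter.mpr ⟨hi, hiU⟩)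
            · refine Finset.mem_union_right _ (Finset.mem_filter.mpr ⟨?_, ?_⟩)
              · simp only [hB, Finset.mem_filter, Finset.mem_univ, true_and]
                exact hiU
              · exact Fin.lt_def.mpr (hp1 i hi)
          have h1 : (pred (b t)).card ≤ P.card + (t : ℕ) := by
            calc (pred (b t)).card ≤ (P ∪ B.filter (fun i => i < b t)).card :=
                  Finset.card_le_card hsplit
              _ ≤ P.card + (B.filter (fun i => i < b t)).card := Finset.card_union_le _ _
              _ ≤ P.card + (t : ℕ) := by exact Nat.add_le_add_left (hcount t) _
          omega
        have hsum : (P.card : ℝ≥0∞) * β ≤ g (DSSNode.inn (b t)) := by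
          have hle : ∑ u ∈ P.image DSSNode.out,
              (if u ∈ U ∧ DSSNode.inn (b t) ∉ U then dssCap L N α β pred W u (DSSNode.inn (b t)) else 0)
              ≤ g (DSSNode.inn (b t)) := by
            rw [hg]
            exact Finset.sum_le_sum_of_subset (Finset.subset_univ _)
          rw [Finset.sum_image (by intro x _ y _ h; injection h)] at hle
          have heq : ∀ i ∈ P,
              (if DSSNode.out i ∈ U ∧ DSSNode.inn (b t) ∉ U
                then dssCap L N α β pred W (DSSNode.out i) (DSSNode.inn (b t)) else 0) = β := by
            intro i hi
            rw [Finset.mem_filter] at hi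
            simp [dssCap, hi.1, hi.2, hinn, hNb]
          rw [Finset.sum_congr rfl heq, Finset.sum_const, nsmul_eq_mul] at hle
          exact hle
        refine le_trans (min_le_left _ _) (le_trans ?_ hsum)
        exact mul_le_mul_left (Nat.cast_le.mpr hPcard) β
  calc ∑ i ∈ Finset.range (k - F), min (((d - F - i : ℕ) : ℝ≥0∞) * β) α
      = ∑ t : Fin (k - F), min (((d - F - (t : ℕ) : ℕ) : ℝ≥0∞) * β) α :=
        (Fin.sum_univ_eq_sum_range _ _).symm
    _ ≤ ∑ t : Fin (k - F), g (v t) := Finset.sum_le_sum (fun t _ => key t)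
    _ = ∑ x ∈ Finset.univ.image v, g x :=
        (Finset.sum_image (fun x _ y _ h => hvinj h)).symm
    _ ≤ ∑ x : DSSNode L, g x := Finset.sum_le_sum_of_subset (Finset.subset_univ _)
    _ = dssCutCap L N α β pred W U := hgC
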